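/- Let N be a left near-ring and d a multiplicative derivation of N satisfying d(xy) = d(x)·d(y) for all x, y ∈ N. Then d(x)·y·z = d(x)·y·d(z) for all x, y, z ∈ N. -/
import Mathlib


class LeftNearRing (N : Type*) extends AddGroup N, Mul N where
  mul_assoc : ∀ a b c : N, a * b * c = a * (b * c)
  left_distrib : ∀ a b c : N, a * (b + c) = a * b + a * c

theorem stmt15 {N : Type*} [LeftNearRing N]
    (d : N → N) (hd : ∀ x y : N, d (x * y) = x * d y + d x * y)
    (hh : ∀ x y : N, d (x * y) = d x * d y) :
    ∀ x y z : N, d x * y * z = d x * y * d z := by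
  have m := LeftNearRing.mul_assoc (N := N)
  have l := LeftNearRing.left_distrib (N := N)
  -- Step 1: partial right distributivity
  have D : ∀ a b c : N, d a * d b * c = a * (d b * c) + d a * (b * c) := by
    intro a b c
    have e1 : d (a * b * c) = a * (b * d c) + d a * d b * c := by
      rw [hd, hh, m]
    have e2 : d (a * (b * c)) = a * (b * d c) + (a * (d b * c) + d a * (b * c)) := by
      rw [hd, hd, l, add_assoc]
    have : a * (b * d c) + d a * d b * c
        = a * (b * d c) + (a * (d b * c) + d a * (b * c)) := by
      rw [← e1, ← e2, m]
    exact add_left_cancel this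
  intro x y z
  have h1 : d x * d (y * z) = x * d (y * z) + d x * (y * d z) := by
    have := D x y (d z)
    rw [m (d x) (d y) (d z), ← hh y z] at this
    exact this
  have h2 : d x * d (y * z) = x * d (y * z) + d x * (y * z) := by
    rw [← hh, hd]
  have h3 : x * d (y * z) + d x * (y * d z) = x * d (y * z) + d x * (y * z) := by
    rw [← h1, h2]
  have := add_left_cancel h3
  rw [m, m, this]
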